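/- The set Ŝ consisting of 1̂, q̂, all monomials x̂_{j_1}⋯x̂_{j_m} (m ≥ 1), and all monomials x̂_{j_1}⋯x̂_{j_t} q̂ x̂_{j_{t+1}}⋯x̂_{j_m} (m ≥ 1, 0 ≤ t ≤ m) is a k-basis of the free invariant algebra Â = T(V)/I. -/

import Mathlib

noncomputable section

/-- The free `K`-vector space on `X ⊕ {q̃}`. -/
abbrev FreeInvModule (K : Type*) [Field K] (X : Type*) : Type _ := (X ⊕ Unit) →₀ K

/-- The generator `q̃` inside the tensor algebra `T(V)`. -/
def qTilde (K : Type*) [Field K] (X : Type*) : TensorAlgebra K (FreeInvModule K X) :=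
  TensorAlgebra.ι K (Finsupp.single (Sum.inr ()) 1)

/-- The relations generating the ideal `I`: `q̃⊗q̃ = q̃` and `q̃⊗a⊗q̃ = q̃⊗a` for all `a`. -/
inductive InvRel (K : Type*) [Field K] (X : Type*) :
    TensorAlgebra K (FreeInvModule K X) → TensorAlgebra K (FreeInvModule K X) → Prop
  | idem : InvRel K X (qTilde K X * qTilde K X) (qTilde K X)
  | inv (a : TensorAlgebra K (FreeInvModule K X)) :
      InvRel K X (qTilde K X * a * qTilde K X) (qTilde K X * a)

/-- The free invariant algebra `Â = T(V)/I`. -/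
abbrev FreeInvAlg (K : Type*) [Field K] (X : Type*) : Type _ := RingQuot (InvRel K X)

/-- `q̂ = q̃ + I`. -/
def qHat (K : Type*) [Field K] (X : Type*) : FreeInvAlg K X :=
  RingQuot.mkAlgHom K (InvRel K X) (qTilde K X)

/-- The canonical map `î : X → Â`, `î(x_j) = x_j + I`. -/
def xHat (K : Type*) [Field K] (X : Type*) (j : X) : FreeInvAlg K X :=
  RingQuot.mkAlgHom K (InvRel K X) (TensorAlgebra.ι K (Finsupp.single (Sum.inl j) 1))

/-- The monomial `x̂_{j_1} ⋯ x̂_{j_m}` associated with a list `[j_1, …, j_m]`. -/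
def hatMon (K : Type*) [Field K] (X : Type*) (l : List X) : FreeInvAlg K X :=
  (l.map (xHat K X)).prod



/-- Normal-form monoid: `inl w` is a pure word, `inr (l₁,l₂)` is `l₁ q l₂`. -/
abbrev InvMonoid (X : Type*) : Type _ := List X ⊕ (List X × List X)

namespace InvMonoid

variable {X : Type*}

instance : Mul (InvMonoid X) :=
  ⟨fun a b => match a, b with
    | .inl w, .inl w' => .inl (w ++ w')
    | .inl w, .inr (l₁, l₂) => .inr (w ++ l₁, l₂)
    | .inr (l₁, l₂), .inl w => .inr (l₁, l₂ ++ w)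
    | .inr (l₁, l₂), .inr (l₁', l₂') => .inr (l₁, l₂ ++ l₁' ++ l₂')⟩

instance : One (InvMonoid X) := ⟨.inl []⟩

instance : Monoid (InvMonoid X) where
  mul_assoc a b c := by
    rcases a with w | ⟨l₁, l₂⟩ <;> rcases b with w' | ⟨l₁', l₂'⟩ <;>
      rcases c with w'' | ⟨l₁'', l₂''⟩ <;>
      simp [HMul.hMul, Mul.mul, List.append_assoc]
  one_mul a := by
    rcases a with w | ⟨l₁, l₂⟩ <;> simp [HMul.hMul, Mul.mul, One.one, OfNat.ofNat]
  mul_one a := by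
    rcases a with w | ⟨l₁, l₂⟩ <;> simp [HMul.hMul, Mul.mul, One.one, OfNat.ofNat]

def Q : InvMonoid X := .inr ([], [])

lemma inl_mul_inl (w w' : List X) : (.inl w : InvMonoid X) * .inl w' = .inl (w ++ w') := rfl

lemma Q_mul_Q : (Q : InvMonoid X) * Q = Q := rfl

lemma Q_mul_mul_Q (m : InvMonoid X) : Q * m * Q = Q * m := by
  rcases m with w | ⟨l₁, l₂⟩ <;> simp [Q, HMul.hMul, Mul.mul]

end InvMonoid

section Hom

variable (K : Type*) [Field K] (X : Type*)

/-- Generators of the model algebra. -/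
def invGen : X ⊕ Unit → MonoidAlgebra K (InvMonoid X)
  | .inl j => MonoidAlgebra.of K (InvMonoid X) (.inl [j])
  | .inr _ => MonoidAlgebra.of K (InvMonoid X) InvMonoid.Q

/-- The algebra map `T(V) → K[M]`. -/
def invPhi : TensorAlgebra K (FreeInvModule K X) →ₐ[K] MonoidAlgebra K (InvMonoid X) :=
  TensorAlgebra.lift K (Finsupp.lift (MonoidAlgebra K (InvMonoid X)) K (X ⊕ Unit) (invGen K X))

lemma invPhi_ι_single (s : X ⊕ Unit) (c : K) :
    invPhi K X (TensorAlgebra.ι K (Finsupp.single s c)) = c • invGen K X s := by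
  simp [invPhi, Finsupp.lift_apply, Finsupp.sum_single_index]

lemma invPhi_qTilde : invPhi K X (qTilde K X) = MonoidAlgebra.of K (InvMonoid X) InvMonoid.Q := by
  rw [qTilde, invPhi_ι_single]; simp [invGen]

lemma q_sandwich (b : MonoidAlgebra K (InvMonoid X)) :
    MonoidAlgebra.of K (InvMonoid X) InvMonoid.Q * b * MonoidAlgebra.of K (InvMonoid X) InvMonoid.Q
      = MonoidAlgebra.of K (InvMonoid X) InvMonoid.Q * b := by
  induction b using MonoidAlgebra.induction_linear with
  | zero => simp
  | add f g hf hg => simp only [mul_add, add_mul, hf, hg]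
  | single m c =>
      simp only [MonoidAlgebra.of_apply, MonoidAlgebra.single_mul_single, one_mul, mul_one]
      rw [InvMonoid.Q_mul_mul_Q]

lemma invPhi_rel : ∀ ⦃a b : TensorAlgebra K (FreeInvModule K X)⦄,
    InvRel K X a b → invPhi K X a = invPhi K X b := by
  intro a b h
  cases h with
  | idem => rw [map_mul, invPhi_qTilde, ← map_mul, InvMonoid.Q_mul_Q]
  | inv a => simp only [map_mul, invPhi_qTilde, q_sandwich]

/-- The induced algebra map `Â → K[M]`. -/
def invPsi : FreeInvAlg K X →ₐ[K] MonoidAlgebra K (InvMonoid X) :=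
  RingQuot.liftAlgHom K ⟨invPhi K X, invPhi_rel K X⟩

lemma invPsi_mk (a : TensorAlgebra K (FreeInvModule K X)) :
    invPsi K X (RingQuot.mkAlgHom K (InvRel K X) a) = invPhi K X a := by
  rw [invPsi, RingQuot.liftAlgHom_mkAlgHom_apply]

lemma invPsi_qHat : invPsi K X (qHat K X) = MonoidAlgebra.of K (InvMonoid X) InvMonoid.Q := by
  rw [qHat, invPsi_mk, invPhi_qTilde]

lemma invPsi_xHat (j : X) :
    invPsi K X (xHat K X j) = MonoidAlgebra.of K (InvMonoid X) (.inl [j]) := by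
  rw [xHat, invPsi_mk, invPhi_ι_single]; simp [invGen]

lemma invPsi_hatMon (l : List X) :
    invPsi K X (hatMon K X l) = MonoidAlgebra.of K (InvMonoid X) (.inl l) := by
  induction l with
  | nil => simp [hatMon]; rfl
  | cons j t ih =>
      rw [show hatMon K X (j :: t) = xHat K X j * hatMon K X t from by
        simp [hatMon]]
      rw [map_mul, invPsi_xHat, ih, ← map_mul, InvMonoid.inl_mul_inl]
      rfl

lemma invPsi_mid (l₁ l₂ : List X) :
    invPsi K X (hatMon K X l₁ * qHat K X * hatMon K X l₂)
      = MonoidAlgebra.of K (InvMonoid X) (.inr (l₁, l₂)) := by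
  rw [map_mul, map_mul, invPsi_hatMon, invPsi_qHat, invPsi_hatMon, ← map_mul, ← map_mul]
  congr 1
  show (Sum.inl l₁ * InvMonoid.Q * Sum.inl l₂ : InvMonoid X) = _
  simp [InvMonoid.Q, HMul.hMul, Mul.mul]

end Hom


section Main

variable (K : Type*) [Field K] (X : Type*)

lemma hatMon_append (l l' : List X) :
    hatMon K X (l ++ l') = hatMon K X l * hatMon K X l' := by
  simp [hatMon]

lemma qHat_sandwich (b : FreeInvAlg K X) :
    qHat K X * b * qHat K X = qHat K X * b := by
  obtain ⟨a, rfl⟩ := RingQuot.mkAlgHom_surjective K (InvRel K X) b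
  rw [qHat, ← map_mul, ← map_mul]
  exact RingQuot.mkAlgHom_rel K (InvRel.inv a)

/-- Recover an element of `Â` from its normal form. -/
def recover : InvMonoid X → FreeInvAlg K X
  | .inl l => hatMon K X l
  | .inr (l₁, l₂) => hatMon K X l₁ * qHat K X * hatMon K X l₂

lemma invPsi_recover (m : InvMonoid X) :
    invPsi K X (recover K X m) = MonoidAlgebra.of K (InvMonoid X) m := by
  rcases m with l | ⟨l₁, l₂⟩
  · exact invPsi_hatMon K X l
  · exact invPsi_mid K X l₁ l₂

end Main

/-- The set `Ŝ` consisting of `1̂`, `q̂`, all monomials `x̂_{j_1}⋯x̂_{j_m}` (`m ≥ 1`) and all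
monomials `x̂_{j_1}⋯x̂_{j_t} q̂ x̂_{j_{t+1}}⋯x̂_{j_m}` (`m ≥ 1`, `0 ≤ t ≤ m`) is a `K`-basis of
the free invariant algebra `Â = T(V)/I`.  (The empty monomial is `1̂`, and the middle family
with both lists empty gives `q̂`.) -/
theorem freeInvAlg_basis (K : Type*) [Field K] (X : Type*) :
    let Shat : Set (FreeInvAlg K X) :=
      {a | ∃ l : List X, a = hatMon K X l} ∪
      {a | ∃ l₁ l₂ : List X, a = hatMon K X l₁ * qHat K X * hatMon K X l₂}
    LinearIndependent K ((↑) : Shat → FreeInvAlg K X) ∧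
    Submodule.span K Shat = ⊤ := by
  intro Shat
  have hSmul : ∀ u ∈ Shat, ∀ v ∈ Shat, u * v ∈ Shat := by
    rintro u (⟨l, rfl⟩ | ⟨l₁, l₂, rfl⟩) v (⟨l', rfl⟩ | ⟨l₁', l₂', rfl⟩)
    · exact Or.inl ⟨l ++ l', (hatMon_append K X l l').symm⟩
    · exact Or.inr ⟨l ++ l₁', l₂', by simp [hatMon_append, mul_assoc]⟩
    · exact Or.inr ⟨l₁, l₂ ++ l', by simp [hatMon_append, mul_assoc]⟩
    · refine Or.inr ⟨l₁, l₂ ++ l₁' ++ l₂', ?_⟩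
      have h := qHat_sandwich K X (hatMon K X l₂ * hatMon K X l₁')
      calc hatMon K X l₁ * qHat K X * hatMon K X l₂ *
            (hatMon K X l₁' * qHat K X * hatMon K X l₂')
          = hatMon K X l₁ * (qHat K X * (hatMon K X l₂ * hatMon K X l₁') * qHat K X) *
            hatMon K X l₂' := by noncomm_ring
        _ = hatMon K X l₁ * (qHat K X * (hatMon K X l₂ * hatMon K X l₁')) *
            hatMon K X l₂' := by rw [h]
        _ = hatMon K X l₁ * qHat K X * hatMon K X (l₂ ++ l₁' ++ l₂') := by
            rw [hatMon_append, hatMon_append]; noncomm_ring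
  constructor
  · -- linear independence
    have hs : ∀ s : Shat, ∃ m : InvMonoid X, (s : FreeInvAlg K X) = recover K X m := by
      rintro ⟨s, ⟨l, rfl⟩ | ⟨l₁, l₂, rfl⟩⟩
      exacts [⟨.inl l, rfl⟩, ⟨.inr (l₁, l₂), rfl⟩]
    choose g hg using hs
    have ginj : Function.Injective g := by
      intro s s' h
      exact Subtype.ext (by rw [hg s, hg s', h])
    apply LinearIndependent.of_comp (invPsi K X).toLinearMap
    have hcomp : ((invPsi K X).toLinearMap ∘ ((↑) : Shat → FreeInvAlg K X)) =
        (⇑(MonoidAlgebra.basis (InvMonoid X) K) ∘ g) := by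
      funext s
      show invPsi K X (s : FreeInvAlg K X) = _
      rw [hg s, invPsi_recover]
      simp [MonoidAlgebra.basis_apply, MonoidAlgebra.of_apply]
    rw [hcomp]
    exact (MonoidAlgebra.basis (InvMonoid X) K).linearIndependent.comp g ginj
  · -- spanning
    rw [eq_top_iff]
    rintro b -
    obtain ⟨a, rfl⟩ := RingQuot.mkAlgHom_surjective K (InvRel K X) b
    have hmul : ∀ u ∈ Submodule.span K Shat, ∀ v ∈ Submodule.span K Shat,
        u * v ∈ Submodule.span K Shat := by
      intro u hu v hv
      have h1 : u * v ∈ Submodule.span K Shat * Submodule.span K Shat :=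
        Submodule.mul_mem_mul hu hv
      rw [Submodule.span_mul_span] at h1
      refine Submodule.span_le.mpr ?_ h1
      intro w hw
      rw [Set.mem_mul] at hw
      obtain ⟨x, hx, y, hy, rfl⟩ := hw
      exact Submodule.subset_span (hSmul x hx y hy)
    induction a using TensorAlgebra.induction with
    | algebraMap r =>
        rw [AlgHom.commutes, Algebra.algebraMap_eq_smul_one]
        exact Submodule.smul_mem _ _
          (Submodule.subset_span (Or.inl ⟨[], by simp [hatMon]⟩))
    | ι v =>
        induction v using Finsupp.induction_linear with
        | zero => rw [map_zero, map_zero]; exact zero_mem _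
        | add f g hf hg => rw [map_add, map_add]; exact add_mem hf hg
        | single s c =>
            have hc : Finsupp.single s c = c • Finsupp.single s (1 : K) := by
              rw [Finsupp.smul_single, smul_eq_mul, mul_one]
            rw [hc, map_smul, map_smul]
            refine Submodule.smul_mem _ _ (Submodule.subset_span ?_)
            rcases s with j | u
            · exact Or.inl ⟨[j], by simp [hatMon, xHat]⟩
            · exact Or.inr ⟨[], [], by simp [hatMon, qHat, qTilde]⟩
    | mul x y hx hy => rw [map_mul]; exact hmul _ hx _ hy
    | add x y hx hy => rw [map_add]; exact add_mem hx hy
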